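/- Asymptotically, X₄(n) = 2^{√(2n)(1+o(1))}; more precisely, for n = t(t+1)/2, X₄(n) = (t−1)2^t + 1 where t = (−1+√(1+8n))/2, so log₂ X₄(n) ∼ √(2n). -/

import Mathlib

open Filter Real

/-- `hanoiF j` is the largest nonnegative integer `m` with `j > m(m+1)/2`. -/
def hanoiF (j : ℕ) : ℕ := Nat.findGreatest (fun m => m * (m + 1) / 2 < j) j

/-- Frame–Stewart move count `X₄(n) = Σ_{j=1}^n 2^{f(j)}`. -/
def X4 (n : ℕ) : ℕ := ∑ j ∈ Finset.Icc 1 n, 2 ^ hanoiF j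

lemma tri_succ (a : ℕ) : (a + 1) * (a + 2) / 2 = a * (a + 1) / 2 + (a + 1) := by
  have h1 : (a + 1) * (a + 2) = a * (a + 1) + 2 * (a + 1) := by ring
  have h2 : a * (a + 1) % 2 = 0 := Nat.even_iff.mp (Nat.even_mul_succ_self a)
  omega

lemma tri_le {a b : ℕ} (h : a ≤ b) : a * (a + 1) / 2 ≤ b * (b + 1) / 2 :=
  Nat.div_le_div_right (Nat.mul_le_mul h (by omega))

lemma tri_mono : Monotone (fun m => m * (m + 1) / 2) := by
  intro a b hab
  exact Nat.div_le_div_right (Nat.mul_le_mul hab (by omega))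

lemma tri_strictMono : StrictMono (fun m => m * (m + 1) / 2) := by
  have h : ∀ a : ℕ, a * (a + 1) / 2 < (a + 1) * (a + 2) / 2 := by
    intro a; rw [tri_succ]; omega
  exact strictMono_nat_of_lt_succ h

lemma hanoiF_lt {n : ℕ} (hn : 1 ≤ n) : hanoiF n * (hanoiF n + 1) / 2 < n := by
  have := Nat.findGreatest_spec (P := fun m => m * (m + 1) / 2 < n) (m := 0)
    (Nat.zero_le n) (by omega)
  exact this

lemma le_tri_hanoiF_succ (n : ℕ) : n ≤ (hanoiF n + 1) * (hanoiF n + 2) / 2 := by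
  by_contra h
  push_neg at h
  have h1 : hanoiF n + 1 ≤ n := by
    have := tri_succ (hanoiF n)
    omega
  exact absurd h (Nat.findGreatest_is_greatest
    (P := fun m => m * (m + 1) / 2 < n) (Nat.lt_succ_self _) h1)

lemma hanoiF_eq {t j : ℕ} (h1 : t * (t + 1) / 2 < j) (h2 : j ≤ (t + 1) * (t + 2) / 2) :
    hanoiF j = t := by
  have hj1 : 1 ≤ j := by omega
  have hl := hanoiF_lt hj1
  have hu := le_tri_hanoiF_succ j
  set f := hanoiF j with hf
  by_contra hne
  rcases Nat.lt_or_ge f t with h | h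
  · have h3 : (f + 1) * (f + 2) / 2 ≤ t * (t + 1) / 2 := tri_le h
    omega
  · have ht : t + 1 ≤ f := by omega
    have h3 : (t + 1) * (t + 2) / 2 ≤ f * (f + 1) / 2 := tri_le ht
    omega

lemma X4_tri (s : ℕ) : X4 ((s + 1) * (s + 2) / 2) = s * 2 ^ (s + 1) + 1 := by
  induction s with
  | zero => decide
  | succ a ih =>
    have key : X4 ((a + 2) * (a + 3) / 2)
        = X4 ((a + 1) * (a + 2) / 2) + (a + 2) * 2 ^ (a + 1) := by
      have hle2 : (a + 1) * (a + 2) / 2 ≤ (a + 2) * (a + 3) / 2 := tri_le (by omega)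
      have hsplit := Finset.sum_Ioc_consecutive (fun j => 2 ^ hanoiF j)
        (Nat.zero_le ((a + 1) * (a + 2) / 2)) hle2
      have hmid : ∑ j ∈ Finset.Ioc ((a + 1) * (a + 2) / 2) ((a + 2) * (a + 3) / 2),
          2 ^ hanoiF j = (a + 2) * 2 ^ (a + 1) := by
        have hc : ∀ j ∈ Finset.Ioc ((a + 1) * (a + 2) / 2) ((a + 2) * (a + 3) / 2),
            2 ^ hanoiF j = 2 ^ (a + 1) := fun j hj => by
          rw [Finset.mem_Ioc] at hj
          rw [hanoiF_eq hj.1 hj.2]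
        rw [Finset.sum_congr rfl hc, Finset.sum_const, smul_eq_mul, Nat.card_Ioc]
        congr 1
        have h : (a + 2) * (a + 3) / 2 = (a + 1) * (a + 2) / 2 + (a + 2) := tri_succ (a + 1)
        omega
      have hIcc : ∀ m : ℕ, Finset.Icc 1 m = Finset.Ioc 0 m := fun m => by
        rw [← Finset.Icc_add_one_left_eq_Ioc, zero_add]
      unfold X4
      simp only [hIcc]
      rw [← hsplit, hmid]
    show X4 ((a + 2) * (a + 3) / 2) = (a + 1) * 2 ^ (a + 2) + 1
    rw [key, ih, pow_succ]
    ring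

lemma X4_mono : Monotone X4 := by
  intro a b hab
  exact Finset.sum_le_sum_of_subset (Finset.Icc_subset_Icc_right hab)

lemma two_pow_le_X4 {n : ℕ} (hn : 1 ≤ n) : 2 ^ hanoiF n ≤ X4 n :=
  Finset.single_le_sum (f := fun j => (2 : ℕ) ^ hanoiF j)
    (fun i _ => Nat.zero_le _) (Finset.mem_Icc.mpr ⟨hn, le_rfl⟩)

lemma X4_le {n : ℕ} : X4 n ≤ (hanoiF n + 1) * 2 ^ (hanoiF n + 1) := by
  calc X4 n ≤ X4 ((hanoiF n + 1) * (hanoiF n + 2) / 2) := X4_mono (le_tri_hanoiF_succ n)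
    _ = hanoiF n * 2 ^ (hanoiF n + 1) + 1 := X4_tri (hanoiF n)
    _ ≤ (hanoiF n + 1) * 2 ^ (hanoiF n + 1) := by
        have : 1 ≤ 2 ^ (hanoiF n + 1) := Nat.one_le_two_pow
        nlinarith

lemma hanoiF_tendsto : Tendsto hanoiF atTop atTop := by
  rw [tendsto_atTop]
  intro m
  filter_upwards [eventually_ge_atTop (m * (m + 1) / 2 + 1)] with n hn
  have hm : m ≤ n := by
    have : m ≤ m * (m + 1) / 2 + 1 := by
      rcases Nat.eq_zero_or_pos m with rfl | hm
      · omega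
      · have : m * 2 ≤ m * (m + 1) := Nat.mul_le_mul_left m (by omega)
        omega
    omega
  exact Nat.le_findGreatest hm (by omega)

lemma tendsto_logb_div : Tendsto (fun k : ℕ => Real.logb 2 (k + 1) / k) atTop (nhds 0) := by
  have h1 : Tendsto (fun x : ℝ => Real.log x ^ 1 / (1 * x + (-1))) atTop (nhds 0) :=
    Real.tendsto_pow_log_div_mul_add_atTop 1 (-1) 1 one_ne_zero
  have h2 : Tendsto (fun x : ℝ => Real.log (x + 1) / x) atTop (nhds 0) := by
    have := h1.comp (tendsto_atTop_add_const_right atTop (1 : ℝ) tendsto_id)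
    refine this.congr (fun x => ?_)
    simp only [Function.comp_apply, pow_one, one_mul, id_eq]
    ring_nf
  have h3 : Tendsto (fun x : ℝ => Real.log (x + 1) / x * (Real.log 2)⁻¹) atTop
      (nhds (0 * (Real.log 2)⁻¹)) := h2.mul_const _
  rw [zero_mul] at h3
  have h4 := h3.comp tendsto_natCast_atTop_atTop (α := ℕ)
  refine h4.congr (fun k => ?_)
  simp only [Function.comp_apply, Real.logb]
  ring

lemma tendsto_upper : Tendsto (fun k : ℕ => (Real.logb 2 (k + 1) + (k + 1)) / k) atTop
    (nhds 1) := by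
  have h1 : Tendsto (fun k : ℕ => Real.logb 2 (k + 1) / k + ((k : ℝ) + 1) / k) atTop
      (nhds (0 + 1)) := by
    refine tendsto_logb_div.add ?_
    have := tendsto_natCast_div_add_atTop (1 : ℝ)
    have h2 : Tendsto (fun k : ℕ => 1 + 1 / (k : ℝ)) atTop (nhds (1 + 0)) :=
      tendsto_const_nhds.add tendsto_one_div_atTop_nhds_zero_nat
    rw [add_zero] at h2
    refine h2.congr' ?_
    filter_upwards [eventually_ge_atTop 1] with k hk
    have hk0 : (k : ℝ) ≠ 0 := Nat.cast_ne_zero.mpr (by omega)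
    field_simp
  rw [zero_add] at h1
  refine h1.congr (fun k => ?_)
  rw [← add_div]

lemma tendsto_lower : Tendsto (fun k : ℕ => (k : ℝ) / (k + 2)) atTop (nhds 1) :=
  tendsto_natCast_div_add_atTop (2 : ℝ)

/-- Growth rate of the Frame–Stewart numbers: at triangular numbers
`X₄(t(t+1)/2) = (t−1)·2^t + 1`, and asymptotically
`log₂ X₄(n) ∼ √(2n)`, i.e. `X₄(n) = 2^{√(2n)(1+o(1))}`. -/
theorem stmt_17 :
    (∀ t : ℕ, 1 ≤ t → X4 (t * (t + 1) / 2) = (t - 1) * 2 ^ t + 1) ∧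
    Tendsto (fun n : ℕ => Real.logb 2 (X4 n) / Real.sqrt (2 * n)) atTop (nhds 1) := by
  constructor
  · intro t ht
    obtain ⟨s, rfl⟩ := Nat.exists_eq_add_of_le ht
    have := X4_tri s
    have h1 : (1 + s) * (1 + s + 1) / 2 = (s + 1) * (s + 2) / 2 := by ring_nf
    have h2 : (1 + s - 1) = s := by omega
    rw [h1, this, h2, add_comm 1 s]
  · -- squeeze
    have hlowc : Tendsto (fun n : ℕ => ((hanoiF n : ℝ)) / ((hanoiF n : ℝ) + 2)) atTop
        (nhds 1) := tendsto_lower.comp hanoiF_tendsto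
    have hupc : Tendsto (fun n : ℕ =>
        (Real.logb 2 ((hanoiF n : ℝ) + 1) + ((hanoiF n : ℝ) + 1)) / (hanoiF n : ℝ)) atTop
        (nhds 1) := tendsto_upper.comp hanoiF_tendsto
    refine tendsto_of_tendsto_of_tendsto_of_le_of_le' hlowc hupc ?_ ?_
    · -- lower bound
      filter_upwards [hanoiF_tendsto.eventually (eventually_ge_atTop 1),
        eventually_ge_atTop 1] with n hf1 hn1
      set f := hanoiF n with hfdef
      have hX1 : 2 ^ f ≤ X4 n := two_pow_le_X4 hn1
      have hXpos : (0 : ℝ) < (X4 n : ℝ) := by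
        have : (1 : ℕ) ≤ X4 n := le_trans Nat.one_le_two_pow hX1
        exact_mod_cast this
      have hlogb_low : (f : ℝ) ≤ Real.logb 2 (X4 n) := by
        have h2f : ((2 : ℝ)) ^ f ≤ (X4 n : ℝ) := by exact_mod_cast hX1
        calc (f : ℝ) = Real.logb 2 ((2 : ℝ) ^ f) := by
              rw [Real.logb_pow, Real.logb_self_eq_one (by norm_num)]; ring
          _ ≤ Real.logb 2 (X4 n) :=
              Real.logb_le_logb_of_le (by norm_num) (by positivity) h2f
      have hsqrt_le : Real.sqrt (2 * n) ≤ (f : ℝ) + 2 := by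
        rw [Real.sqrt_le_left (by positivity)]
        have hnat : 2 * n ≤ (f + 2) ^ 2 := by
          have h : n ≤ (f + 1) * (f + 2) / 2 := le_tri_hanoiF_succ n
          have hd : (f + 1) * (f + 2) / 2 * 2 ≤ (f + 1) * (f + 2) :=
            Nat.div_mul_le_self _ 2
          nlinarith [h, hd]
        calc (2 * (n : ℝ)) = ((2 * n : ℕ) : ℝ) := by push_cast; ring
          _ ≤ (((f + 2) ^ 2 : ℕ) : ℝ) := by exact_mod_cast hnat
          _ = ((f : ℝ) + 2) ^ 2 := by push_cast; ring
      have hsqrt_pos : (0 : ℝ) < Real.sqrt (2 * n) := by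
        rw [Real.sqrt_pos]
        have : (1 : ℝ) ≤ (n : ℝ) := by exact_mod_cast hn1
        linarith
      exact div_le_div₀ (le_trans (by positivity) hlogb_low) hlogb_low hsqrt_pos hsqrt_le
    · -- upper bound
      filter_upwards [hanoiF_tendsto.eventually (eventually_ge_atTop 1),
        eventually_ge_atTop 1] with n hf1 hn1
      set f := hanoiF n with hfdef
      have hX1 : 2 ^ f ≤ X4 n := two_pow_le_X4 hn1
      have hXpos : (0 : ℝ) < (X4 n : ℝ) := by
        have : (1 : ℕ) ≤ X4 n := le_trans Nat.one_le_two_pow hX1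
        exact_mod_cast this
      have hfpos : (0 : ℝ) < (f : ℝ) := by exact_mod_cast hf1
      have hlogb_up : Real.logb 2 (X4 n) ≤ Real.logb 2 ((f : ℝ) + 1) + ((f : ℝ) + 1) := by
        have hXle : (X4 n : ℝ) ≤ ((f : ℝ) + 1) * 2 ^ (f + 1) := by
          have := X4_le (n := n)
          calc (X4 n : ℝ) ≤ (((f + 1) * 2 ^ (f + 1) : ℕ) : ℝ) := by exact_mod_cast this
            _ = ((f : ℝ) + 1) * 2 ^ (f + 1) := by push_cast; ring
        calc Real.logb 2 (X4 n) ≤ Real.logb 2 (((f : ℝ) + 1) * 2 ^ (f + 1)) :=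
              Real.logb_le_logb_of_le (by norm_num) hXpos hXle
          _ = Real.logb 2 ((f : ℝ) + 1) + ((f : ℝ) + 1) := by
              rw [Real.logb_mul (by positivity) (by positivity), Real.logb_pow,
                Real.logb_self_eq_one (by norm_num)]
              push_cast; ring
      have hle_sqrt : (f : ℝ) ≤ Real.sqrt (2 * n) := by
        rw [Real.le_sqrt (by positivity) (by positivity)]
        have hnat : f ^ 2 ≤ 2 * n := by
          have h : f * (f + 1) / 2 < n := hanoiF_lt hn1
          have hd : f * (f + 1) / 2 * 2 = f * (f + 1) :=
            Nat.div_two_mul_two_of_even (Nat.even_mul_succ_self f)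
          nlinarith [h, hd]
        calc ((f : ℝ)) ^ 2 = ((f ^ 2 : ℕ) : ℝ) := by push_cast; ring
          _ ≤ ((2 * n : ℕ) : ℝ) := by exact_mod_cast hnat
          _ = 2 * (n : ℝ) := by push_cast; ring
      have hlogb_nonneg : (0 : ℝ) ≤ Real.logb 2 (X4 n) := by
        have h2f : ((2 : ℝ)) ^ f ≤ (X4 n : ℝ) := by exact_mod_cast hX1
        have : (1 : ℝ) ≤ (X4 n : ℝ) := le_trans (one_le_pow₀ (by norm_num)) h2f
        exact Real.logb_nonneg (by norm_num) this
      exact div_le_div₀ (le_trans hlogb_nonneg hlogb_up) hlogb_up hfpos hle_sqrt
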